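/- For every α ∈ (1/2, 2), no global maximizer of the Takagi–Landsberg function f_α on [0,1] is a dyadic rational number (i.e., of the form k·2^{−n} with k, n nonnegative integers). -/

import Mathlib

open MeasureTheory Filter Set

/-- The tent map: distance to the nearest integer. -/
noncomputable def phi (t : ℝ) : ℝ := ⨅ z : ℤ, |t - (z : ℝ)|

/-- A function in the Takagi class, for coefficient sequence `c`. -/
noncomputable def takagiF (c : ℕ → ℝ) (t : ℝ) : ℝ := ∑' m : ℕ, c m * phi (2 ^ m * t)

/-- `T(ρ) = Σ 2^{-(n+2)} (1 - ρ n)`. -/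
noncomputable def Trho (ρ : ℕ → ℝ) : ℝ := ∑' n : ℕ, (1 - ρ n) / 2 ^ (n + 2)

/-- A `{-1,+1}`-valued sequence. -/
def IsSign (ρ : ℕ → ℝ) : Prop := ∀ n, ρ n = 1 ∨ ρ n = -1

/-- `ρ` is a Rademacher expansion of `t`. -/
def IsRademacherExp (ρ : ℕ → ℝ) (t : ℝ) : Prop := IsSign ρ ∧ Trho ρ = t

/-- The step condition for coefficients `c`. -/
def StepCond (c : ℕ → ℝ) (ρ : ℕ → ℝ) : Prop :=
  ∀ n : ℕ, 1 ≤ n → ρ n * ∑ m ∈ Finset.range n, 2 ^ m * c m * ρ m ≤ 0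

noncomputable def sharpAux (c : ℕ → ℝ) : ℕ → ℝ × ℝ
  | 0 => (1, c 0)
  | n + 1 =>
    let S := (sharpAux c n).2
    let r : ℝ := if S ≤ 0 then 1 else -1
    (r, S + 2 ^ (n + 1) * c (n + 1) * r)

/-- The sequence `ρ♯` for coefficients `c`. -/
noncomputable def rhoSharp (c : ℕ → ℝ) (n : ℕ) : ℝ := (sharpAux c n).1

noncomputable def flatAux (c : ℕ → ℝ) : ℕ → ℝ × ℝ
  | 0 => (1, c 0)
  | n + 1 =>
    let S := (flatAux c n).2
    let r : ℝ := if S < 0 then 1 else -1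
    (r, S + 2 ^ (n + 1) * c (n + 1) * r)

/-- The sequence `ρ♭` for coefficients `c`. -/
noncomputable def rhoFlat (c : ℕ → ℝ) (n : ℕ) : ℝ := (flatAux c n).1

/-- The Takagi–Landsberg function with parameter `α`. -/
noncomputable def fTL (α : ℝ) (t : ℝ) : ℝ := ∑' m : ℕ, α ^ m / 2 ^ m * phi (2 ^ m * t)

noncomputable def sharpAuxTL (α : ℝ) : ℕ → ℝ × ℝ
  | 0 => (1, 1)
  | n + 1 =>
    let S := (sharpAuxTL α n).2
    let r : ℝ := if S ≤ 0 then 1 else -1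
    (r, S + α ^ (n + 1) * r)

/-- The sequence `ρ♯(α)` for the Takagi–Landsberg function. -/
noncomputable def rhoSharpTL (α : ℝ) (n : ℕ) : ℝ := (sharpAuxTL α n).1

noncomputable def flatAuxTL (α : ℝ) : ℕ → ℝ × ℝ
  | 0 => (1, 1)
  | n + 1 =>
    let S := (flatAuxTL α n).2
    let r : ℝ := if S < 0 then 1 else -1
    (r, S + α ^ (n + 1) * r)

/-- The sequence `ρ♭(α)` for the Takagi–Landsberg function. -/
noncomputable def rhoFlatTL (α : ℝ) (n : ℕ) : ℝ := (flatAuxTL α n).1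

/-- `τ♯(α) = T(ρ♯(α))`. -/
noncomputable def tauSharp (α : ℝ) : ℝ := Trho (rhoSharpTL α)

/-- `τ♭(α) = T(ρ♭(α))`. -/
noncomputable def tauFlat (α : ℝ) : ℝ := Trho (rhoFlatTL α)

/-- The Littlewood polynomial `p_{2n}(x) = 1 - x - x² - ⋯ - x^{2n}`. -/
noncomputable def p2n (n : ℕ) (x : ℝ) : ℝ := 1 - ∑ m ∈ Finset.Icc 1 (2 * n), x ^ m


lemma phi_bddBelow (t : ℝ) : BddBelow (Set.range fun z : ℤ => |t - (z : ℝ)|) :=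
  ⟨0, by rintro x ⟨z, rfl⟩; positivity⟩

lemma phi_nonneg (t : ℝ) : 0 ≤ phi t :=
  le_ciInf fun z => abs_nonneg _

lemma phi_le (t : ℝ) (z : ℤ) : phi t ≤ |t - (z : ℝ)| :=
  ciInf_le (phi_bddBelow t) z

lemma phi_left {t : ℝ} (h0 : 0 ≤ t) (h1 : t ≤ 1/2) : phi t = t := by
  refine le_antisymm ?_ (le_ciInf fun z => ?_)
  · have := phi_le t 0
    simpa [abs_of_nonneg h0] using this
  · rcases le_or_gt (z : ℝ) 0 with hz | hz
    · calc t = t - 0 := by ring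
        _ ≤ t - z := by linarith
        _ ≤ |t - z| := le_abs_self _
    · have hz1 : (1:ℝ) ≤ z := by exact_mod_cast hz
      calc t ≤ 1 - t := by linarith
        _ ≤ (z:ℝ) - t := by linarith
        _ ≤ |t - z| := by rw [abs_sub_comm]; exact le_abs_self _
  
lemma phi_right {t : ℝ} (h0 : 1/2 ≤ t) (h1 : t ≤ 1) : phi t = 1 - t := by
  refine le_antisymm ?_ (le_ciInf fun z => ?_)
  · have := phi_le t 1
    rw [abs_sub_comm] at this
    simpa [abs_of_nonneg (by linarith : (0:ℝ) ≤ 1 - t)] using this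
  · rcases le_or_gt (z : ℝ) 0 with hz | hz
    · calc 1 - t ≤ t := by linarith
        _ ≤ t - z := by linarith
        _ ≤ |t - z| := le_abs_self _
    · have hz1 : (1:ℝ) ≤ z := by exact_mod_cast hz
      calc 1 - t ≤ (z:ℝ) - t := by linarith
        _ ≤ |t - z| := by rw [abs_sub_comm]; exact le_abs_self _

lemma phi_int_add (z : ℤ) (t : ℝ) : phi ((z : ℝ) + t) = phi t := by
  refine le_antisymm (le_ciInf fun w => ?_) (le_ciInf fun w => ?_)
  · have := phi_le ((z:ℝ) + t) (z + w)
    simpa [add_sub_add_left_eq_sub] using this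
  · have := phi_le t (w - z)
    calc phi t ≤ |t - ((w : ℤ) - z : ℤ)| := this
      _ = |(z:ℝ) + t - w| := by push_cast; ring_nf
  
lemma phi_neg (t : ℝ) : phi (-t) = phi t := by
  refine le_antisymm (le_ciInf fun w => ?_) (le_ciInf fun w => ?_)
  · have := phi_le (-t) (-w)
    calc phi (-t) ≤ |-t - ((-w : ℤ) : ℝ)| := this
      _ = |t - w| := by push_cast; rw [← abs_neg]; ring_nf
  · have := phi_le t (-w)
    calc phi t ≤ |t - ((-w : ℤ) : ℝ)| := this
      _ = |-t - w| := by push_cast; rw [← abs_neg]; ring_nf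

lemma phi_intCast (z : ℤ) : phi (z : ℝ) = 0 := by
  have h := phi_le (z:ℝ) z
  have := phi_nonneg (z:ℝ)
  simp at h; linarith

lemma phi_le_half (t : ℝ) : phi t ≤ 1/2 := by
  have h := phi_le t ⌊t + 1/2⌋
  have h1 : (⌊t + 1/2⌋ : ℝ) ≤ t + 1/2 := Int.floor_le _
  have h2 : t + 1/2 < ⌊t + 1/2⌋ + 1 := Int.lt_floor_add_one _
  refine h.trans ?_
  rw [abs_le]
  constructor <;> linarith

lemma phi_natCast (n : ℕ) : phi (n : ℝ) = 0 := by
  have := phi_intCast (n : ℤ); push_cast at this; exact this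

lemma phi_int_add_small (z : ℤ) {ε : ℝ} (h0 : 0 ≤ ε) (h1 : ε ≤ 1/2) :
    phi ((z:ℝ) + ε) = ε := by rw [phi_int_add, phi_left h0 h1]

lemma phi_int_sub_small (z : ℤ) {ε : ℝ} (h0 : 0 ≤ ε) (h1 : ε ≤ 1/2) :
    phi ((z:ℝ) - ε) = ε := by
  have : (z:ℝ) - ε = -(((-z : ℤ) : ℝ) + ε) := by push_cast; ring
  rw [this, phi_neg, phi_int_add, phi_left h0 h1]

lemma phi_pair_left {u ε : ℝ} (h0 : 0 ≤ ε) (h1 : ε ≤ u) (h2 : u + ε ≤ 1/2) :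
    phi (u + ε) + phi (u - ε) = 2 * phi u := by
  rw [phi_left (by linarith) h2, phi_left (by linarith) (by linarith),
    phi_left (by linarith) (by linarith)]
  ring

lemma phi_pair_right {u ε : ℝ} (h0 : 0 ≤ ε) (h1 : 1/2 ≤ u - ε) (h2 : u + ε ≤ 1) :
    phi (u + ε) + phi (u - ε) = 2 * phi u := by
  rw [phi_right (by linarith) h2, phi_right (by linarith) (by linarith),
    phi_right (by linarith) (by linarith)]
  ring

lemma summable_TL {α : ℝ} (h0 : 0 ≤ α) (h2 : α < 2) (t : ℝ) :
    Summable (fun m : ℕ => α ^ m / 2 ^ m * phi (2 ^ m * t)) := by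
  refine Summable.of_nonneg_of_le (fun m => mul_nonneg (by positivity) (phi_nonneg _))
    (fun m => ?_) (((summable_geometric_of_lt_one (by linarith : (0:ℝ) ≤ α / 2)
      (by linarith : α / 2 < 1))).mul_right (1/2))
  calc α ^ m / 2 ^ m * phi (2 ^ m * t) ≤ α ^ m / 2 ^ m * (1/2) := by
        apply mul_le_mul_of_nonneg_left (phi_le_half _) (by positivity)
    _ = (α/2)^m * (1/2) := by rw [div_pow]

lemma scale_int {k n m : ℕ} (hm : n ≤ m) :
    (2:ℝ)^m * ((k:ℝ)/2^n) = ((2^(m-n)*k : ℕ) : ℝ) := by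
  have e1 : (2:ℝ)^m = 2^(m-n) * 2^n := by rw [← pow_add, Nat.sub_add_cancel hm]
  push_cast
  rw [e1]
  field_simp

lemma case_c (k n N m : ℕ) (hnm : n ≤ m) (hmN : m < N) :
    phi (2^m * ((k:ℝ)/2^n + 1/2^N)) + phi (2^m * ((k:ℝ)/2^n - 1/2^N))
      - 2 * phi (2^m * ((k:ℝ)/2^n)) = 2^(m+1)/2^N := by
  have hA := scale_int (k := k) hnm
  have hε0 : (0:ℝ) ≤ 2^m/2^N := by positivity
  have hεh : (2:ℝ)^m/2^N ≤ 1/2 := by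
    rw [div_le_div_iff₀ (by positivity) (by norm_num)]
    calc (2:ℝ)^m*2 = 2^(m+1) := by ring
      _ ≤ 2^N := pow_le_pow_right₀ one_le_two hmN
      _ = 1 * 2^N := by ring
  have hcast : ((2^(m-n)*k : ℕ):ℝ) = (((2^(m-n)*k : ℕ) : ℤ):ℝ) := by push_cast; ring
  have h1 : (2:ℝ)^m * ((k:ℝ)/2^n + 1/2^N)
      = (((2^(m-n)*k : ℕ) : ℤ):ℝ) + 2^m/2^N := by rw [mul_add, hA, hcast]; ring
  have h2 : (2:ℝ)^m * ((k:ℝ)/2^n - 1/2^N)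
      = (((2^(m-n)*k : ℕ) : ℤ):ℝ) - 2^m/2^N := by rw [mul_sub, hA, hcast]; ring
  rw [h1, h2, hA, phi_int_add_small _ hε0 hεh, phi_int_sub_small _ hε0 hεh,
    phi_natCast]
  ring

lemma case_d (k n N m : ℕ) (hnm : n ≤ m) (hNm : N ≤ m) :
    phi (2^m * ((k:ℝ)/2^n + 1/2^N)) + phi (2^m * ((k:ℝ)/2^n - 1/2^N))
      - 2 * phi (2^m * ((k:ℝ)/2^n)) = 0 := by
  have hA := scale_int (k := k) hnm
  have hB : (2:ℝ)^m * ((1:ℝ)/2^N) = ((2^(m-N) : ℕ) : ℝ) := by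
    have := scale_int (k := 1) (n := N) (m := m) hNm
    simpa using this
  have h1 : (2:ℝ)^m * ((k:ℝ)/2^n + 1/2^N)
      = (((2^(m-n)*k + 2^(m-N) : ℕ) : ℤ):ℝ) := by rw [mul_add, hA, hB]; push_cast; ring
  have h2 : (2:ℝ)^m * ((k:ℝ)/2^n - 1/2^N)
      = ((((2^(m-n)*k : ℕ) : ℤ) - ((2^(m-N) : ℕ) : ℤ) :ℤ):ℝ) := by
    rw [mul_sub, hA, hB]; push_cast; ring
  rw [h1, h2, hA, phi_intCast, phi_intCast, phi_natCast]
  ring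

lemma case_b (k n N m : ℕ) (hk : Odd k) (hnm : n = m + 1) (hnN : n < N) :
    phi (2^m * ((k:ℝ)/2^n + 1/2^N)) + phi (2^m * ((k:ℝ)/2^n - 1/2^N))
      - 2 * phi (2^m * ((k:ℝ)/2^n)) = -(2 * (2^m/2^N)) := by
  obtain ⟨j, hj⟩ := hk
  subst hnm
  set ε : ℝ := 2^m/2^N with hε
  have hε0 : (0:ℝ) ≤ ε := by positivity
  have hεq : ε ≤ 1/4 := by
    rw [hε, div_le_div_iff₀ (by positivity) (by norm_num)]
    calc (2:ℝ)^m*4 = 2^(m+2) := by ring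
      _ ≤ 2^N := pow_le_pow_right₀ one_le_two (by omega)
      _ = 1 * 2^N := by ring
  have hA : (2:ℝ)^m * ((k:ℝ)/2^(m+1)) = ((j:ℤ):ℝ) + 1/2 := by
    have h2 : (2:ℝ)^(m+1) = 2^m * 2 := by ring
    rw [h2]
    rw [div_mul_eq_div_div]
    rw [mul_div_assoc']
    rw [mul_comm ((2:ℝ)^m), mul_div_assoc]
    have : (k:ℝ) = 2*j+1 := by exact_mod_cast congrArg (Nat.cast : ℕ → ℝ) hj
    field_simp [this]
    push_cast
    linear_combination this
  have h1 : (2:ℝ)^m * ((k:ℝ)/2^(m+1) + 1/2^N) = ((j:ℤ):ℝ) + (1/2 + ε) := by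
    rw [mul_add, hA]; ring
  have h2 : (2:ℝ)^m * ((k:ℝ)/2^(m+1) - 1/2^N) = ((j:ℤ):ℝ) + (1/2 - ε) := by
    rw [mul_sub, hA]; ring
  rw [h1, h2, hA, phi_int_add, phi_int_add, phi_int_add,
    phi_right (by linarith) (by linarith),
    phi_left (by linarith) (by linarith),
    phi_left (by norm_num) (by norm_num)]
  ring

lemma case_a (k n N m : ℕ) (hk : Odd k) (hnm : m + 2 ≤ n) (hnN : n < N) :
    phi (2^m * ((k:ℝ)/2^n + 1/2^N)) + phi (2^m * ((k:ℝ)/2^n - 1/2^N))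
      - 2 * phi (2^m * ((k:ℝ)/2^n)) = 0 := by
  obtain ⟨e, he⟩ : ∃ e, n = m + (e + 2) := ⟨n - m - 2, by omega⟩
  subst he
  set d := e + 2 with hd
  set r := k % 2^d with hrdef
  set q := k / 2^d with hqdef
  have hkqr : k = 2^d * q + r := (Nat.div_add_mod k (2^d)).symm
  have hr_lt : r < 2^d := Nat.mod_lt _ (by positivity)
  have hr_odd : Odd r := by
    rw [Nat.odd_iff] at hk ⊢
    rw [hrdef, Nat.mod_mod_of_dvd k (by exact dvd_pow_self 2 (by omega))]
    exact hk
  have hr_pos : 0 < r := hr_odd.pos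
  set P : ℝ := 2^(e+1) with hP
  have hP2 : (2:ℝ) ≤ P := by
    rw [hP]
    calc (2:ℝ) = 2^1 := by norm_num
      _ ≤ 2^(e+1) := pow_le_pow_right₀ one_le_two (by omega)
  have h2d : (2:ℝ)^d = 2 * P := by rw [hP, hd]; ring
  set u : ℝ := (r:ℝ)/2^d with hu
  set ε : ℝ := 2^m/2^N with hε
  have hε0 : (0:ℝ) ≤ ε := by positivity
  have hεP : ε * (4*P) ≤ 1 := by
    have hnum : (2:ℝ)^m/2^N * (4*P) = 2^(m+e+3)/2^N := by
      rw [hP, pow_add, pow_add]; field_simp; ring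
    rw [hε, hnum, div_le_one (by positivity)]
    exact_mod_cast pow_le_pow_right₀ (by norm_num : (1:ℝ) ≤ 2) (by omega : m+e+3 ≤ N)
  have hu2P : u * (2*P) = r := by rw [hu, h2d]; field_simp
  have hA : (2:ℝ)^m * ((k:ℝ)/2^(m+d)) = ((q:ℤ):ℝ) + u := by
    have hk' : (k:ℝ) = 2^d * q + r := by exact_mod_cast congrArg (Nat.cast : ℕ → ℝ) hkqr
    rw [hu, hk']
    rw [pow_add]
    push_cast
    field_simp
    ring
  have h1 : (2:ℝ)^m * ((k:ℝ)/2^(m+d) + 1/2^N) = ((q:ℤ):ℝ) + (u + ε) := by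
    rw [mul_add, hA]; ring
  have h2 : (2:ℝ)^m * ((k:ℝ)/2^(m+d) - 1/2^N) = ((q:ℤ):ℝ) + (u - ε) := by
    rw [mul_sub, hA]; ring
  rw [h1, h2, hA, phi_int_add, phi_int_add, phi_int_add]
  have hr1 : (1:ℝ) ≤ (r:ℝ) := by exact_mod_cast hr_pos
  have hrlt' : (r:ℝ) ≤ 2*P - 1 := by
    have : r + 1 ≤ 2^d := hr_lt
    have : ((r:ℝ) + 1) ≤ 2^d := by exact_mod_cast this
    rw [h2d] at this; linarith
  have hr_ne : r ≠ 2^(e+1) := by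
    intro hcon
    rw [Nat.odd_iff, hcon] at hr_odd
    simp [Nat.pow_mod] at hr_odd
  rcases Nat.lt_or_ge r (2^(e+1)) with hcase | hcase
  · -- r ≤ 2^(e+1) - 1, left branch
    have hrP : (r:ℝ) ≤ P - 1 := by
      have : r + 1 ≤ 2^(e+1) := hcase
      have : ((r:ℝ) + 1) ≤ P := by rw [hP]; exact_mod_cast this
      linarith
    have g1 : ε ≤ u := by nlinarith
    have g2 : u + ε ≤ 1/2 := by nlinarith
    rw [phi_pair_left hε0 g1 g2]; ring
  · -- r ≥ 2^(e+1) + 1, right branch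
    have hrP : P + 1 ≤ (r:ℝ) := by
      have : 2^(e+1) + 1 ≤ r := by omega
      have : (((2:ℕ)^(e+1) : ℕ):ℝ) + 1 ≤ (r:ℝ) := by exact_mod_cast this
      rw [hP]; push_cast at this ⊢; linarith
    have g1 : 1/2 ≤ u - ε := by nlinarith
    have g2 : u + ε ≤ 1 := by nlinarith
    rw [phi_pair_right hε0 g1 g2]; ring
lemma phi_zero : phi (0:ℝ) = 0 := by simpa using phi_natCast 0

lemma fTL_zero (α : ℝ) : fTL α 0 = 0 := by
  simp [fTL, phi_zero]

lemma fTL_one (α : ℝ) : fTL α 1 = 0 := by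
  have h : (fun m : ℕ => α ^ m / 2 ^ m * phi (2 ^ m * 1)) = fun _ => (0:ℝ) := by
    funext m
    rw [mul_one, show ((2:ℝ)^m) = ((2^m : ℕ):ℝ) by push_cast; ring, phi_natCast]
    ring
  rw [fTL, h, tsum_zero]

lemma fTL_half (α : ℝ) : fTL α (1/2) = 1/2 := by
  rw [fTL, tsum_eq_single 0]
  · norm_num [phi_left]
  · intro m hm
    obtain ⟨j, rfl⟩ := Nat.exists_eq_succ_of_ne_zero hm
    have : (2:ℝ) ^ (j+1) * (1/2) = ((2^j : ℕ):ℝ) := by push_cast; ring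
    rw [this, phi_natCast]; ring

lemma exists_J (α : ℝ) (h1 : 1/2 < α) (h2 : α < 2) :
    ∃ J : ℕ, 1 < ∑ j ∈ Finset.range J, α^(j+1) := by
  by_cases hα1 : 1 ≤ α
  · refine ⟨2, ?_⟩
    rw [Finset.sum_range_succ, Finset.sum_range_one]
    have : α ^ (1+1) = α * α := by ring
    simp only [zero_add, pow_one, this]
    nlinarith [sq_nonneg (α - 1)]
  · push_neg at hα1
    have h0 : (0:ℝ) < α := by linarith
    obtain ⟨J, hJ⟩ : ∃ J : ℕ, α^J < 2*α - 1 := by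
      have := (tendsto_pow_atTop_nhds_zero_of_lt_one h0.le hα1).eventually_lt_const
        (show (0:ℝ) < 2*α - 1 by linarith)
      exact this.exists
    refine ⟨J, ?_⟩
    have hsum : ∑ j ∈ Finset.range J, α^(j+1) = α * ((α^J - 1)/(α - 1)) := by
      rw [← geom_sum_eq (by linarith : α ≠ 1) J, Finset.mul_sum]
      exact Finset.sum_congr rfl fun j _ => (pow_succ' α j)
    rw [hsum, mul_div_assoc']
    rw [lt_div_iff_of_neg (by linarith : α - 1 < 0)]
    have hJ0 : 0 ≤ α^J := by positivity
    nlinarith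

lemma reduce : ∀ n k : ℕ, (0:ℝ) < (k:ℝ)/2^n → (k:ℝ)/2^n < 1 →
    ∃ k' n' : ℕ, Odd k' ∧ 1 ≤ n' ∧ k' < 2^n' ∧ (k:ℝ)/2^n = (k':ℝ)/2^n' := by
  intro n
  induction n with
  | zero =>
    intro k hpos hlt
    exfalso
    simp only [pow_zero, div_one] at hpos hlt
    have : 1 ≤ k := by exact_mod_cast hpos
    have : (1:ℝ) ≤ k := by exact_mod_cast this
    linarith
  | succ n ih =>
    intro k hpos hlt
    rcases Nat.even_or_odd k with ⟨j, hj⟩ | hodd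
    · have he : (k:ℝ)/2^(n+1) = (j:ℝ)/2^n := by
        rw [hj]; push_cast; rw [pow_succ]; field_simp; ring
      rw [he] at hpos hlt ⊢
      exact ih j hpos hlt
    · refine ⟨k, n+1, hodd, by omega, ?_, rfl⟩
      rw [div_lt_one (by positivity)] at hlt
      exact_mod_cast hlt

theorem takagi_landsberg_no_dyadic_maximizer
    (α : ℝ) (hα : α ∈ Set.Ioo (1 / 2 : ℝ) 2)
    (t : ℝ) (ht : t ∈ Set.Icc (0 : ℝ) 1)
    (hmax : ∀ s ∈ Set.Icc (0 : ℝ) 1, fTL α s ≤ fTL α t) :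
    ¬∃ (k : ℕ) (n : ℕ), t = (k : ℝ) / 2 ^ n := by
  obtain ⟨hα1, hα2⟩ := hα
  have hα0 : (0:ℝ) ≤ α := by linarith
  rintro ⟨k, n, rfl⟩
  -- boundary cases
  by_cases h0 : (k:ℝ)/2^n = 0
  · have := hmax (1/2) ⟨by norm_num, by norm_num⟩
    rw [fTL_half, h0, fTL_zero] at this; linarith
  by_cases h1 : (k:ℝ)/2^n = 1
  · have := hmax (1/2) ⟨by norm_num, by norm_num⟩
    rw [fTL_half, h1, fTL_one] at this; linarith
  have hpos : (0:ℝ) < (k:ℝ)/2^n := lt_of_le_of_ne ht.1 (Ne.symm h0)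
  have hlt : (k:ℝ)/2^n < 1 := lt_of_le_of_ne ht.2 h1
  obtain ⟨k', n', hodd, hn1, hklt, heq⟩ := reduce n k hpos hlt
  obtain ⟨J, hJ⟩ := exists_J α hα1 hα2
  have hJ1 : 1 ≤ J := by
    by_contra hc
    push_neg at hc
    interval_cases J
    simp at hJ; linarith
  set N := n' + J with hN
  have hn'N : n' < N := by omega
  -- abbreviations
  set u : ℝ := (k':ℝ)/2^n' + 1/2^N with hu
  set v : ℝ := (k':ℝ)/2^n' - 1/2^N with hv
  -- membership of u, v in [0,1]
  have hA : (0:ℝ) < 2^n' := by positivity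
  have hB : (0:ℝ) < 2^N := by positivity
  have hAB : (2:ℝ)^n' ≤ 2^N := pow_le_pow_right₀ one_le_two (by omega)
  have hk1 : (1:ℝ) ≤ (k':ℝ) := by exact_mod_cast hodd.pos
  have hkA : (k':ℝ) ≤ 2^n' - 1 := by
    have : (k':ℝ) + 1 ≤ 2^n' := by exact_mod_cast hklt
    linarith
  have hu01 : u ∈ Set.Icc (0:ℝ) 1 := by
    constructor
    · rw [hu]; positivity
    · rw [hu, div_add_div _ _ (ne_of_gt hA) (ne_of_gt hB), div_le_one (by positivity)]
      nlinarith
  have hv01 : v ∈ Set.Icc (0:ℝ) 1 := by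
    constructor
    · rw [hv, sub_nonneg, div_le_div_iff₀ hB hA]
      nlinarith
    · rw [hv]
      have : (k':ℝ)/2^n' ≤ 1 := by rw [div_le_one hA]; linarith
      have : (0:ℝ) < 1/2^N := by positivity
      linarith
  -- the difference formula
  set D : ℕ → ℝ := fun m => α^m/2^m *
    (phi (2^m * ((k':ℝ)/2^n' + 1/2^N)) + phi (2^m * ((k':ℝ)/2^n' - 1/2^N))
      - 2 * phi (2^m * ((k':ℝ)/2^n'))) with hD
  have S1 := summable_TL hα0 hα2 u
  have S2 := summable_TL hα0 hα2 v
  have S3 := summable_TL hα0 hα2 ((k':ℝ)/2^n')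
  have hdiff : fTL α u + fTL α v - 2 * fTL α ((k':ℝ)/2^n') = ∑' m, D m := by
    rw [fTL, fTL, fTL, ← S1.tsum_add S2, ← tsum_mul_left, ← (S1.add S2).tsum_sub (S3.mul_left 2)]
    congr 1
    funext m
    rw [hD, hu, hv]
    ring
  have hfin : ∑' m, D m = ∑ m ∈ Finset.range N, D m := by
    apply tsum_eq_sum
    intro m hm
    rw [Finset.mem_range, not_lt] at hm
    rw [hD]
    simp only
    rw [case_d k' n' N m (by omega) hm]
    ring
  -- evaluate the finite sum
  have hsplit : ∑ m ∈ Finset.range N, D m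
      = ∑ m ∈ Finset.Ico 0 n', D m + ∑ m ∈ Finset.Ico n' N, D m := by
    rw [Finset.range_eq_Ico, ← Finset.sum_Ico_consecutive _ (Nat.zero_le n') (le_of_lt hn'N)]
  have hfirst : ∑ m ∈ Finset.Ico 0 n', D m = -(2 * α^(n'-1) / 2^N) := by
    rw [Finset.sum_eq_single_of_mem (n'-1) (by simp; omega)]
    · rw [hD]
      simp only
      rw [case_b k' n' N (n'-1) hodd (by omega) hn'N]
      have h2m : (0:ℝ) < 2^(n'-1) := by positivity
      field_simp
    · intro m hm hne
      rw [Finset.mem_Ico] at hm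
      rw [hD]
      simp only
      rw [case_a k' n' N m hodd (by omega) hn'N]
      ring
  have hsecond : ∑ m ∈ Finset.Ico n' N, D m = 2/2^N * (α^(n'-1) * ∑ j ∈ Finset.range J, α^(j+1)) := by
    have step : ∀ m ∈ Finset.Ico n' N, D m = 2/2^N * α^m := by
      intro m hm
      rw [Finset.mem_Ico] at hm
      rw [hD]
      simp only
      rw [case_c k' n' N m hm.1 hm.2]
      have : (0:ℝ) < 2^m := by positivity
      rw [pow_succ]
      field_simp
    rw [Finset.sum_congr rfl step, ← Finset.mul_sum]
    congr 1
    rw [hN, Finset.sum_Ico_eq_sum_range]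
    simp only [Nat.add_sub_cancel_left]
    rw [Finset.mul_sum]
    apply Finset.sum_congr rfl
    intro j _
    rw [← pow_add]
    congr 1
    omega
  -- positivity
  have hpowpos : (0:ℝ) < α^(n'-1) := by positivity
  have htot : 0 < ∑ m ∈ Finset.range N, D m := by
    rw [hsplit, hfirst, hsecond]
    have h2N : (0:ℝ) < 2/2^N := by positivity
    have : 2/2^N * (α^(n'-1) * 1) < 2/2^N * (α^(n'-1) * ∑ j ∈ Finset.range J, α^(j+1)) := by
      apply mul_lt_mul_of_pos_left _ h2N
      exact mul_lt_mul_of_pos_left hJ hpowpos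
    have he : 2 * α^(n'-1) / 2^N = 2/2^N * (α^(n'-1) * 1) := by ring
    linarith [he ▸ this]
  -- contradiction with maximality
  rw [heq] at hmax
  have m1 := hmax u hu01
  have m2 := hmax v hv01
  rw [← hfin, ← hdiff] at htot
  linarith
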